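/- Let v be a vertex with v ≠ s whose incoming edges come from predecessors p_1,…,p_d (with multiplicity for parallel edges) with first-instance weights l_1,…,l_d and second-instance weights l′_1,…,l′_d, let a ≥ 1 be an integer, and let B be a real budget. Then τ₂(v, a, B) = min over all tuples (a_1,…,a_d) of nonnegative integers with a_1+⋯+a_d = a of max_{1≤s≤d} ( τ₂(p_s, a_s, B − l_s) + l′_s ), where the minimum over an empty set of tuples (d = 0) is +∞ and the case a_s = 0 uses τ₂(p_s, 0, ·) = −∞. -/

import Mathlib

open scoped BigOperators

/-- `IsWalk src dst u v p` : the list of edges `p` forms a directed walk from `u` to `v`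
in the multigraph whose edges `e` go from `src e` to `dst e`. -/
def IsWalk {V E : Type} (src dst : E → V) : V → V → List E → Prop
  | u, v, [] => u = v
  | u, v, e :: p => src e = u ∧ IsWalk src dst (dst e) v p

/-- `tau2 src dst l l' s v a B` : the smallest threshold `L₂ ∈ ℝ` (as an element of
`ℝ ∪ {−∞, +∞}`) such that at least `a` directed `s`–`v` paths have `l`-weight at most `B`
and `l'`-weight at most `L₂`; it is `−∞` when `a ≤ 0` and `+∞` when fewer than `a`
`s`–`v` paths of `l`-weight at most `B` exist. -/
noncomputable def tau2 {V E : Type} (src dst : E → V) (l l' : E → ℝ) (s v : V)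
    (a B : ℝ) : EReal :=
  sInf {x : EReal | ∃ L₂ : ℝ, x = (L₂ : EReal) ∧
    a ≤ (Nat.card {p : List E // IsWalk src dst s v p ∧
      (p.map l).sum ≤ B ∧ (p.map l').sum ≤ L₂} : ℝ)}

lemma isWalk_length_le {V E : Type} (src dst : E → V)
    (ord : V → ℕ) (hacyc : ∀ e, ord (src e) < ord (dst e)) :
    ∀ (p : List E) (u w : V), IsWalk src dst u w p → ord u + p.length ≤ ord w := by
  intro p
  induction p with
  | nil => intro u w h; cases h; simp
  | cons e q ih =>
    intro u w h
    obtain ⟨he, hq⟩ := h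
    subst he
    have := ih (dst e) w hq
    have h2 := hacyc e
    simp only [List.length_cons]
    omega

lemma walkSet_finite {V E : Type} [Finite E] (src dst : E → V)
    (ord : V → ℕ) (hacyc : ∀ e, ord (src e) < ord (dst e))
    (u w : V) (P : List E → Prop) :
    {p : List E | IsWalk src dst u w p ∧ P p}.Finite := by
  apply (List.finite_length_le E (ord w)).subset
  intro p hp
  have := isWalk_length_le src dst ord hacyc p u w hp.1
  simp only [Set.mem_setOf_eq]
  omega

lemma isWalk_concat {V E : Type} (src dst : E → V) (e : E) : ∀ (q : List E) (u w : V),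
    IsWalk src dst u w (q ++ [e]) ↔ IsWalk src dst u (src e) q ∧ dst e = w := by
  intro q
  induction q with
  | nil =>
    intro u w
    constructor
    · rintro ⟨h1, h2⟩; exact ⟨h1.symm, h2⟩
    · rintro ⟨h1, h2⟩; exact ⟨h1.symm, h2⟩
  | cons f q ih =>
    intro u w
    constructor
    · rintro ⟨h1, h2⟩
      obtain ⟨h3, h4⟩ := (ih (dst f) w).1 h2
      exact ⟨⟨h1, h3⟩, h4⟩
    · rintro ⟨⟨h1, h3⟩, h4⟩
      exact ⟨h1, (ih (dst f) w).2 ⟨h3, h4⟩⟩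

/-- Count of walks within budgets. -/
noncomputable def Ncount {V E : Type} (src dst : E → V) (l l' : E → ℝ) (s : V)
    (u : V) (B L : ℝ) : ℕ :=
  Nat.card {p : List E // IsWalk src dst s u p ∧ (p.map l).sum ≤ B ∧ (p.map l').sum ≤ L}

lemma Ncount_def {V E : Type} (src dst : E → V) (l l' : E → ℝ) (s u : V) (B L : ℝ) :
    Ncount src dst l l' s u B L =
      Nat.card {p : List E // IsWalk src dst s u p ∧ (p.map l).sum ≤ B ∧ (p.map l').sum ≤ L} :=
  rfl

lemma walk_subtype_finite {V E : Type} [Finite E] (src dst : E → V) (l l' : E → ℝ)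
    (ord : V → ℕ) (hacyc : ∀ e, ord (src e) < ord (dst e)) (u w : V) (B L : ℝ) :
    Finite {p : List E // IsWalk src dst u w p ∧ (p.map l).sum ≤ B ∧ (p.map l').sum ≤ L} :=
  (walkSet_finite src dst ord hacyc u w
    (fun p => (p.map l).sum ≤ B ∧ (p.map l').sum ≤ L)).to_subtype

lemma Ncount_mono {V E : Type} [Finite E] (src dst : E → V) (l l' : E → ℝ)
    (ord : V → ℕ) (hacyc : ∀ e, ord (src e) < ord (dst e)) (s u : V) (B : ℝ)
    {L L' : ℝ} (h : L ≤ L') :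
    Ncount src dst l l' s u B L ≤ Ncount src dst l l' s u B L' := by
  haveI := walk_subtype_finite src dst l l' ord hacyc s u B L'
  rw [Ncount_def, Ncount_def]
  apply Nat.card_le_card_of_injective
    (fun p => (⟨p.1, p.2.1, p.2.2.1, p.2.2.2.trans h⟩ :
      {p : List E // IsWalk src dst s u p ∧ (p.map l).sum ≤ B ∧ (p.map l').sum ≤ L'}))
  intro p q hpq
  exact Subtype.ext (by simpa [Subtype.ext_iff] using hpq)

/-- Decomposition of the count at `v ≠ s` over last edges. -/
lemma Ncount_decomp {V E : Type} [Fintype E] [DecidableEq V] (src dst : E → V) (l l' : E → ℝ)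
    (ord : V → ℕ) (hacyc : ∀ e, ord (src e) < ord (dst e)) (s : V)
    (v : V) (hv : v ≠ s) (B L : ℝ) :
    Ncount src dst l l' s v B L =
      ∑ e ∈ Finset.univ.filter (fun e => dst e = v),
        Ncount src dst l l' s (src e) (B - l e) (L - l' e) := by
  classical
  let T : E → Prop := fun e => dst e = v
  let F : {e : E // T e} → Type := fun e =>
    {q : List E // IsWalk src dst s (src e.1) q ∧
      (q.map l).sum ≤ B - l e.1 ∧ (q.map l').sum ≤ L - l' e.1}
  haveI hFin : ∀ e, Finite (F e) := fun e =>
    walk_subtype_finite src dst l l' ord hacyc s (src e.1) (B - l e.1) (L - l' e.1)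
  haveI : Finite {p : List E // IsWalk src dst s v p ∧ (p.map l).sum ≤ B ∧ (p.map l').sum ≤ L} :=
    walk_subtype_finite src dst l l' ord hacyc s v B L
  have hbij : Nat.card (Σ e : {e // T e}, F e) =
      Nat.card {p : List E // IsWalk src dst s v p ∧ (p.map l).sum ≤ B ∧ (p.map l').sum ≤ L} := by
    apply Nat.card_eq_of_bijective
      (fun x => ⟨x.2.1 ++ [x.1.1], by
        obtain ⟨⟨e, he⟩, ⟨q, hq1, hq2, hq3⟩⟩ := x
        refine ⟨(isWalk_concat src dst e q s v).2 ⟨hq1, he⟩, ?_, ?_⟩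
        · simp only [List.map_append, List.sum_append, List.map_cons, List.map_nil,
            List.sum_cons, List.sum_nil]
          linarith
        · simp only [List.map_append, List.sum_append, List.map_cons, List.map_nil,
            List.sum_cons, List.sum_nil]
          linarith⟩)
    constructor
    · rintro ⟨⟨e, he⟩, ⟨q, hq⟩⟩ ⟨⟨e', he'⟩, ⟨q', hq'⟩⟩ h
      have h1 : q ++ [e] = q' ++ [e'] := congrArg Subtype.val h
      have he2 : e = e' := by
        have := congrArg (fun t => t.getLast?) h1
        simpa using this
      have hq2 : q = q' := by
        have := congrArg (fun t => t.dropLast) h1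
        simpa using this
      subst he2; subst hq2; rfl
    · rintro ⟨p, hp1, hp2, hp3⟩
      rcases List.eq_nil_or_concat p with rfl | ⟨q, e, rfl⟩
      · exact absurd hp1.symm hv
      · have hp1' : IsWalk src dst s v (q ++ [e]) := by
          rwa [List.concat_eq_append] at hp1
        have hp2' : ((q ++ [e]).map l).sum ≤ B := by
          rwa [List.concat_eq_append] at hp2
        have hp3' : ((q ++ [e]).map l').sum ≤ L := by
          rwa [List.concat_eq_append] at hp3
        obtain ⟨hq1, he⟩ := (isWalk_concat src dst e q s v).1 hp1'
        simp only [List.map_append, List.sum_append, List.map_cons, List.map_nil,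
          List.sum_cons, List.sum_nil] at hp2' hp3'
        exact ⟨⟨⟨e, he⟩, ⟨q, hq1, by linarith, by linarith⟩⟩,
          Subtype.ext (List.concat_eq_append (as := q) (a := e)).symm⟩
  rw [Ncount_def, ← hbij]
  haveI : Fintype {e // T e} := Subtype.fintype T
  haveI : ∀ e : {e // T e}, Fintype (F e) := fun e => Fintype.ofFinite (F e)
  rw [Nat.card_eq_fintype_card, Fintype.card_sigma]
  rw [Finset.sum_subtype (p := T) _ (fun e => by simp [T])
    (fun e => Ncount src dst l l' s (src e) (B - l e) (L - l' e))]
  exact Finset.sum_congr rfl (fun e _ => by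
    rw [Ncount_def, Nat.card_eq_fintype_card])

/-- Splitting a natural number below a sum. -/
lemma exists_split {E : Type} [DecidableEq E] (T : Finset E) (N : E → ℕ) (a : ℕ)
    (h : a ≤ ∑ e ∈ T, N e) :
    ∃ f : E → ℕ, (∀ e, f e ≤ N e) ∧ ∑ e ∈ T, f e = a := by
  induction T using Finset.cons_induction generalizing a with
  | empty =>
    simp only [Finset.sum_empty, Nat.le_zero] at h
    exact ⟨fun _ => 0, fun _ => Nat.zero_le _, by simp [h]⟩
  | cons e T he ih =>
    rw [Finset.sum_cons] at h
    obtain ⟨f, hf1, hf2⟩ := ih (a - min a (N e)) (by omega)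
    refine ⟨fun x => if x = e then min a (N e) else f x, ?_, ?_⟩
    · intro x
      rcases eq_or_ne x e with rfl | hx
      · simp only [if_pos rfl]; exact min_le_right _ _
      · simp only [if_neg hx]; exact hf1 x
    · rw [Finset.sum_cons, if_pos rfl,
        Finset.sum_congr rfl (fun x hx => if_neg (by rintro rfl; exact he hx)), hf2]
      omega

theorem stmt13
    {V E : Type} [Fintype V] [Fintype E] [DecidableEq V]
    (src dst : E → V) (l l' : E → ℝ)
    (ord : V → ℕ) (hacyc : ∀ e, ord (src e) < ord (dst e))
    (s : V) (v : V) (hv : v ≠ s) (a : ℕ) (ha : 1 ≤ a) (B : ℝ) :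
    tau2 src dst l l' s v (a : ℝ) B = sInf {x : EReal |
      ∃ f : E → ℕ,
        (∑ e ∈ Finset.univ.filter (fun e => dst e = v), f e) = a ∧
        x = (Finset.univ.filter (fun e => dst e = v)).sup
          (fun e => tau2 src dst l l' s (src e) (f e : ℝ) (B - l e) + (l' e : EReal))} := by
  classical
  set T := Finset.univ.filter (fun e => dst e = v) with hT
  have htau : ∀ (u : V) (b : ℝ) (Bu : ℝ), tau2 src dst l l' s u b Bu =
      sInf {x : EReal | ∃ L₂ : ℝ, x = (L₂ : EReal) ∧
        b ≤ (Ncount src dst l l' s u Bu L₂ : ℝ)} := by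
    intro u b Bu; rfl
  apply le_antisymm
  · -- LHS ≤ RHS
    apply le_sInf
    rintro x ⟨f, hfsum, rfl⟩
    set X : EReal := T.sup
      (fun e => tau2 src dst l l' s (src e) (f e : ℝ) (B - l e) + (l' e : EReal)) with hX
    by_contra hlt
    push_neg at hlt
    obtain ⟨L, hL1, hL2⟩ := EReal.exists_between_coe_real hlt
    have key : ∀ e ∈ T, f e ≤ Ncount src dst l l' s (src e) (B - l e) (L - l' e) := by
      intro e heT
      have hle : tau2 src dst l l' s (src e) (f e : ℝ) (B - l e) + (l' e : EReal) ≤ X := by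
        rw [hX]
        exact Finset.le_sup
          (f := fun e => tau2 src dst l l' s (src e) (f e : ℝ) (B - l e) + (l' e : EReal)) heT
      have hlt2 : tau2 src dst l l' s (src e) (f e : ℝ) (B - l e) <
          ((L - l' e : ℝ) : EReal) := by
        have h1 : tau2 src dst l l' s (src e) (f e : ℝ) (B - l e) + (l' e : EReal)
            < (L : EReal) := lt_of_le_of_lt hle hL1
        rw [show ((L - l' e : ℝ) : EReal) = (L : EReal) - (l' e : EReal) by
          rw [← EReal.coe_sub]]
        exact (EReal.lt_sub_iff_add_lt (Or.inl (EReal.coe_ne_bot _))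
          (Or.inl (EReal.coe_ne_top _))).2 h1
      rw [htau] at hlt2
      obtain ⟨y, hy, hylt⟩ := sInf_lt_iff.1 hlt2
      obtain ⟨L'', rfl, hcard⟩ := hy
      have hL'' : L'' ≤ L - l' e := by exact_mod_cast hylt.le
      have hmono := Ncount_mono src dst l l' ord hacyc s (src e) (B - l e) hL''
      have hfe : f e ≤ Ncount src dst l l' s (src e) (B - l e) L'' := by exact_mod_cast hcard
      exact hfe.trans hmono
    have hsum : a ≤ Ncount src dst l l' s v B L := by
      rw [Ncount_decomp src dst l l' ord hacyc s v hv B L, ← hT, ← hfsum]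
      exact Finset.sum_le_sum key
    have hfin : tau2 src dst l l' s v (a : ℝ) B ≤ (L : EReal) := by
      rw [htau]
      exact sInf_le ⟨L, rfl, by exact_mod_cast hsum⟩
    exact absurd hL2 (not_lt.2 hfin)
  · -- RHS ≤ LHS
    rw [htau]
    apply le_sInf
    rintro x ⟨L, rfl, hcard⟩
    have hcard' : a ≤ Ncount src dst l l' s v B L := by exact_mod_cast hcard
    rw [Ncount_decomp src dst l l' ord hacyc s v hv B L, ← hT] at hcard'
    obtain ⟨f, hf1, hf2⟩ := exists_split T
      (fun e => Ncount src dst l l' s (src e) (B - l e) (L - l' e)) a hcard'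
    refine le_trans (sInf_le ⟨f, hf2, rfl⟩) ?_
    apply Finset.sup_le
    intro e heT
    have htle : tau2 src dst l l' s (src e) (f e : ℝ) (B - l e) ≤ ((L - l' e : ℝ) : EReal) := by
      rw [htau]
      exact sInf_le ⟨L - l' e, rfl, by exact_mod_cast hf1 e⟩
    calc tau2 src dst l l' s (src e) (f e : ℝ) (B - l e) + (l' e : EReal)
        ≤ ((L - l' e : ℝ) : EReal) + (l' e : EReal) := add_le_add_left htle _
      _ = (L : EReal) := by rw [← EReal.coe_add]; norm_num
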